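/- Let a ∈ K and define a product on K[X] by X^k ∙ X^l = a·(k/(l+1))·X^{k+l} for all k,l ≥ 0 (where the coefficient is the rational number k/(l+1) viewed in K). Then this product satisfies the right preLie identity (P∙Q)∙R − P∙(Q∙R) = (P∙R)∙Q − P∙(R∙Q) for all P,Q,R ∈ K[X]. -/
import Mathlib


open Polynomial

theorem stmt_3 (K : Type*) [Field K] [CharZero K] (a : K)
    (B : K[X] →ₗ[K] K[X] →ₗ[K] K[X])
    (hB : ∀ k l : ℕ, B (X ^ k) (X ^ l) = (a * ((k : K) / ((l : K) + 1))) • X ^ (k + l)) :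
    ∀ P Q R : K[X], B (B P Q) R - B P (B Q R) = B (B P R) Q - B P (B R Q) := by
  have hne : ∀ n : ℕ, ((n : K) + 1) ≠ 0 := fun n => by
    have : ((n + 1 : ℕ) : K) ≠ 0 := Nat.cast_ne_zero.mpr n.succ_ne_zero
    push_cast at this
    exact this
  have hC1 : ∀ (c : K) (p q : K[X]), B (C c * p) q = C c * B p q := by
    intro c p q
    rw [← smul_eq_C_mul, ← smul_eq_C_mul, map_smul, LinearMap.smul_apply]
  have hC2 : ∀ (c : K) (p q : K[X]), B p (C c * q) = C c * B p q := by
    intro c p q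
    rw [← smul_eq_C_mul, ← smul_eq_C_mul, map_smul]
  have key : ∀ k l m : ℕ,
      B (B (X ^ k : K[X]) (X ^ l)) (X ^ m) - B (X ^ k) (B (X ^ l) (X ^ m)) =
      B (B (X ^ k) (X ^ m)) (X ^ l) - B (X ^ k) (B (X ^ m) (X ^ l)) := by
    intro k l m
    have h1 : ((l : K) + 1) ≠ 0 := hne l
    have h2 : ((m : K) + 1) ≠ 0 := hne m
    have h3 : ((l : K) + (m : K) + 1) ≠ 0 := by
      have := hne (l + m); push_cast at this; exact this
    rw [hB k l, hB l m, hB k m, hB m l, map_smul, LinearMap.smul_apply, map_smul,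
      map_smul, LinearMap.smul_apply, map_smul, hB, hB, hB, hB, smul_smul, smul_smul,
      smul_smul, smul_smul, show k + l + m = k + (l + m) by omega,
      show k + m + l = k + (m + l) by omega, show m + l = l + m by omega,
      ← sub_smul, ← sub_smul]
    congr 1
    push_cast
    field_simp
    ring
  intro P Q R
  induction P using Polynomial.induction_on' with
  | add p q hp hq =>
    simp only [map_add, LinearMap.add_apply]
    linear_combination hp + hq
  | monomial n c =>
    induction Q using Polynomial.induction_on' with
    | add p q hp hq =>
      simp only [map_add, LinearMap.add_apply]
      linear_combination hp + hq
    | monomial n' c' =>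
      induction R using Polynomial.induction_on' with
      | add p q hp hq =>
        simp only [map_add, LinearMap.add_apply]
        linear_combination hp + hq
      | monomial n'' c'' =>
        simp only [← C_mul_X_pow_eq_monomial, hC1, hC2]
        linear_combination (C c * C c' * C c'') * key n n' n''
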